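/- Let G be a Cohen–Macaulay very well-covered graph with 2n vertices (standard labeling), let G_1 = G \ {x_i, y_i : x_i ∈ N(x_1) or y_i ∈ N(x_1)}, and let z_{N(x_1)} be the product of the variables in N(x_1). Then the cover ideal satisfies J(G) = z_{N(x_1)} · J(G_1) + x_1 · J(G \ {x_1, y_1}). -/
import Mathlib


/-- A vertex cover: a set of vertices meeting every edge. -/
def IsVertexCover {V : Type*} (G : SimpleGraph V) (C : Set V) : Prop :=
  ∀ ⦃v w : V⦄, G.Adj v w → v ∈ C ∨ w ∈ C

/-- A minimal vertex cover: no proper subset is a vertex cover. -/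
def IsMinimalVertexCover {V : Type*} (G : SimpleGraph V) (C : Set V) : Prop :=
  IsVertexCover G C ∧ ∀ D : Set V, D ⊂ C → ¬ IsVertexCover G D

/-- An independent set: pairwise non-adjacent vertices. -/
def IsIndepSet {V : Type*} (G : SimpleGraph V) (S : Set V) : Prop :=
  ∀ ⦃v : V⦄, v ∈ S → ∀ ⦃w : V⦄, w ∈ S → ¬ G.Adj v w

/-- A maximal independent set: no proper superset is independent. -/
def IsMaximalIndepSet {V : Type*} (G : SimpleGraph V) (S : Set V) : Prop :=
  IsIndepSet G S ∧ ∀ T : Set V, IsIndepSet G T → S ⊆ T → S = T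

/-- The cover ideal of a graph: the monomial ideal generated by the products of the
variables over the minimal vertex covers of G. -/
noncomputable def coverIdeal (K : Type*) [Field K] {V : Type*} [DecidableEq V]
    (G : SimpleGraph V) : Ideal (MvPolynomial V K) :=
  Ideal.span {m | ∃ C : Finset V, IsMinimalVertexCover G ↑C ∧
    m = ∏ v ∈ C, MvPolynomial.X v}

/-- `u` is (the exponent vector of) a minimal monomial generator of the monomial
ideal `I`: the monomial `X^u` lies in `I` and no proper divisor of it lies in `I`. -/
def IsMinimalGen {K : Type*} [Field K] {V : Type*}
    (I : Ideal (MvPolynomial V K)) (u : V →₀ ℕ) : Prop :=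
  MvPolynomial.monomial u (1 : K) ∈ I ∧
    ∀ v : V →₀ ℕ, v ≤ u → MvPolynomial.monomial v (1 : K) ∈ I → v = u

/-- The cover ideal of the induced subgraph on a vertex subset W, viewed as a monomial
ideal of the full polynomial ring. -/
noncomputable def coverIdealOn (K : Type*) [Field K] {V : Type*} [DecidableEq V]
    (G : SimpleGraph V) (W : Set V) : Ideal (MvPolynomial V K) :=
  Ideal.span {m | ∃ C : Finset V, ↑C ⊆ W ∧
    IsMinimalVertexCover (G.induce W) {v : W | (v : V) ∈ C} ∧
    m = ∏ v ∈ C, MvPolynomial.X v}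

lemma isMinimalVertexCover_iff {V : Type*} (G : SimpleGraph V) (C : Set V) :
    IsMinimalVertexCover G C ↔
      IsVertexCover G C ∧ ∀ v ∈ C, ∃ w, G.Adj v w ∧ w ∉ C := by
  constructor
  · rintro ⟨hc, hmin⟩
    refine ⟨hc, fun v hv => ?_⟩
    have hsub : C \ {v} ⊂ C := Set.sdiff_singleton_ssubset.mpr hv
    have hnc := hmin _ hsub
    simp only [IsVertexCover] at hnc
    push_neg at hnc
    obtain ⟨a, b, hab, ha, hb⟩ := hnc
    rcases hc hab with h | h
    · have hav : a = v := by
        by_contra h'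
        exact ha ⟨h, h'⟩
      subst hav
      refine ⟨b, hab, fun hbC => hb ⟨hbC, ?_⟩⟩
      intro hbv
      rw [Set.mem_singleton_iff] at hbv
      subst hbv
      exact G.irrefl hab
    · have hbv : b = v := by
        by_contra h'
        exact hb ⟨h, h'⟩
      subst hbv
      refine ⟨a, hab.symm, fun haC => ha ⟨haC, ?_⟩⟩
      intro hav
      rw [Set.mem_singleton_iff] at hav
      subst hav
      exact G.irrefl hab
  · rintro ⟨hc, hpriv⟩
    refine ⟨hc, fun D hD hDc => ?_⟩
    obtain ⟨v, hvC, hvD⟩ := Set.exists_of_ssubset hD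
    obtain ⟨w, hvw, hwC⟩ := hpriv v hvC
    rcases hDc hvw with h | h
    · exact hvD h
    · exact hwC (hD.1 h)

lemma induce_mvc_iff {V : Type*} (G : SimpleGraph V) (W : Set V) (D : Set V) (hD : D ⊆ W) :
    IsMinimalVertexCover (G.induce W) {v : W | (v : V) ∈ D} ↔
      ((∀ ⦃a b : V⦄, a ∈ W → b ∈ W → G.Adj a b → a ∈ D ∨ b ∈ D) ∧
       ∀ v ∈ D, ∃ w ∈ W, G.Adj v w ∧ w ∉ D) := by
  rw [isMinimalVertexCover_iff]
  constructor
  · rintro ⟨hc, hp⟩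
    constructor
    · intro a b ha hb hab
      exact hc (v := ⟨a, ha⟩) (w := ⟨b, hb⟩) hab
    · intro v hv
      obtain ⟨w, hw, hwD⟩ := hp ⟨v, hD hv⟩ hv
      exact ⟨w, w.2, hw, hwD⟩
  · rintro ⟨hc, hp⟩
    constructor
    · rintro ⟨a, ha⟩ ⟨b, hb⟩ hab
      exact hc ha hb hab
    · rintro ⟨v, hvW⟩ hv
      obtain ⟨w, hwW, hvw, hwD⟩ := hp v hv
      exact ⟨⟨w, hwW⟩, hvw, hwD⟩

lemma induce_mvc_iff_fin {V : Type*} [DecidableEq V] (G : SimpleGraph V) (W : Set V)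
    (D : Finset V) (hD : ↑D ⊆ W) :
    IsMinimalVertexCover (G.induce W) {v : W | (v : V) ∈ D} ↔
      ((∀ ⦃a b : V⦄, a ∈ W → b ∈ W → G.Adj a b → a ∈ D ∨ b ∈ D) ∧
       ∀ v ∈ D, ∃ w ∈ W, G.Adj v w ∧ w ∉ D) :=
  induce_mvc_iff G W (↑D) hD

lemma adj_y1_eq {n : ℕ} (hn : 0 < n) (G : SimpleGraph (Fin n ⊕ Fin n))
    (h2 : IsMaximalIndepSet G (Set.range Sum.inr))
    (h4 : ∀ i j : Fin n, G.Adj (Sum.inl i) (Sum.inr j) → i ≤ j)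
    (w : Fin n ⊕ Fin n) (hw : G.Adj w (Sum.inr (⟨0, hn⟩ : Fin n))) :
    w = Sum.inl (⟨0, hn⟩ : Fin n) := by
  cases w with
  | inl k =>
    have hk := h4 k ⟨0, hn⟩ hw
    have hk' : (k : ℕ) ≤ 0 := hk
    have : k = ⟨0, hn⟩ := by
      apply Fin.ext
      show (k : ℕ) = 0
      omega
    rw [this]
  | inr k =>
    exact absurd hw (h2.1 ⟨k, rfl⟩ ⟨⟨0, hn⟩, rfl⟩)

lemma keyLemma {n : ℕ} (hn : 0 < n) (G : SimpleGraph (Fin n ⊕ Fin n))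
    (h2 : IsMaximalIndepSet G (Set.range Sum.inr))
    (h3 : ∀ i : Fin n, G.Adj (Sum.inl i) (Sum.inr i))
    (h4 : ∀ i j : Fin n, G.Adj (Sum.inl i) (Sum.inr j) → i ≤ j)
    (h6 : ∀ i j k : Fin n, i ≠ j → j ≠ k → i ≠ k →
      ∀ z ∈ ({Sum.inl i, Sum.inr i} : Set (Fin n ⊕ Fin n)),
        G.Adj z (Sum.inl j) → G.Adj (Sum.inr j) (Sum.inl k) → G.Adj z (Sum.inl k))
    (a b : Fin n ⊕ Fin n) (hab : G.Adj a b)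
    (ha1 : G.Adj (Sum.inl (⟨0, hn⟩ : Fin n)) (Sum.inl (Sum.elim id id a)) ∨
      G.Adj (Sum.inl (⟨0, hn⟩ : Fin n)) (Sum.inr (Sum.elim id id a)))
    (hax : a ≠ Sum.inl (⟨0, hn⟩ : Fin n))
    (haN : ¬ G.Adj (Sum.inl (⟨0, hn⟩ : Fin n)) a) :
    b = Sum.inl (⟨0, hn⟩ : Fin n) ∨ G.Adj (Sum.inl (⟨0, hn⟩ : Fin n)) b := by
  cases a with
  | inl i =>
    simp only [Sum.elim_inl, id] at ha1
    rcases ha1 with h | hyi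
    · exact absurd h haN
    have hi0 : i ≠ ⟨0, hn⟩ := fun h => hax (by rw [h])
    cases b with
    | inl k =>
      by_cases hk0 : k = ⟨0, hn⟩
      · left; rw [hk0]
      by_cases hki : k = i
      · subst hki; exact absurd hab (G.irrefl)
      · right
        exact (h6 k i ⟨0, hn⟩ hki hi0 hk0 (Sum.inl k) (Set.mem_insert _ _)
          hab.symm hyi.symm).symm
    | inr k =>
      by_cases hk0 : k = ⟨0, hn⟩
      · subst hk0
        exact absurd (adj_y1_eq hn G h2 h4 _ hab) hax
      by_cases hki : k = i
      · right; rw [hki]; exact hyi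
      · right
        exact (h6 k i ⟨0, hn⟩ hki hi0 hk0 (Sum.inr k)
          (Set.mem_insert_iff.mpr (Or.inr rfl)) hab.symm hyi.symm).symm
  | inr i =>
    simp only [Sum.elim_inr, id] at ha1
    rcases ha1 with hxi | h
    · have hi0 : i ≠ ⟨0, hn⟩ := by
        rintro rfl
        exact haN (h3 ⟨0, hn⟩)
      cases b with
      | inr k => exact absurd hab (h2.1 ⟨i, rfl⟩ ⟨k, rfl⟩)
      | inl k =>
        by_cases hk0 : k = ⟨0, hn⟩
        · left; rw [hk0]
        by_cases hki : k = i
        · right; rw [hki]; exact hxi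
        · right
          exact h6 ⟨0, hn⟩ i k (Ne.symm hi0) (Ne.symm hki) (Ne.symm hk0)
            (Sum.inl ⟨0, hn⟩) (Set.mem_insert _ _) hxi hab
    · exact absurd h haN

/-- Lemma 3.4: J(G) = z_{N(x_1)} J(G_1) + x_1 J(G \ {x_1, y_1}). -/
theorem stmt_13 {n : ℕ} (hn : 0 < n) (K : Type*) [Field K]
    (G : SimpleGraph (Fin n ⊕ Fin n)) [DecidableRel G.Adj]
    (h1 : IsMinimalVertexCover G (Set.range Sum.inl))
    (h2 : IsMaximalIndepSet G (Set.range Sum.inr))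
    (h3 : ∀ i : Fin n, G.Adj (Sum.inl i) (Sum.inr i))
    (h4 : ∀ i j : Fin n, G.Adj (Sum.inl i) (Sum.inr j) → i ≤ j)
    (h5 : ∀ i j : Fin n, G.Adj (Sum.inl i) (Sum.inr j) → ¬ G.Adj (Sum.inl i) (Sum.inl j))
    (h6 : ∀ i j k : Fin n, i ≠ j → j ≠ k → i ≠ k →
      ∀ z ∈ ({Sum.inl i, Sum.inr i} : Set (Fin n ⊕ Fin n)),
        G.Adj z (Sum.inl j) → G.Adj (Sum.inr j) (Sum.inl k) → G.Adj z (Sum.inl k)) :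
    coverIdeal K G =
      Ideal.span {∏ v ∈ G.neighborFinset (Sum.inl (⟨0, hn⟩ : Fin n)), MvPolynomial.X v} *
        coverIdealOn K G {v : Fin n ⊕ Fin n |
          ¬ G.Adj (Sum.inl (⟨0, hn⟩ : Fin n)) (Sum.inl (Sum.elim id id v)) ∧
          ¬ G.Adj (Sum.inl (⟨0, hn⟩ : Fin n)) (Sum.inr (Sum.elim id id v))} +
      Ideal.span {(MvPolynomial.X (Sum.inl (⟨0, hn⟩ : Fin n)) : MvPolynomial (Fin n ⊕ Fin n) K)} *
        coverIdealOn K G {v : Fin n ⊕ Fin n |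
          v ≠ Sum.inl (⟨0, hn⟩ : Fin n) ∧ v ≠ Sum.inr (⟨0, hn⟩ : Fin n)} := by
  classical
  set x1 : Fin n ⊕ Fin n := Sum.inl (⟨0, hn⟩ : Fin n) with hx1def
  set y1 : Fin n ⊕ Fin n := Sum.inr (⟨0, hn⟩ : Fin n) with hy1def
  set V1 : Set (Fin n ⊕ Fin n) := {v : Fin n ⊕ Fin n |
      ¬ G.Adj x1 (Sum.inl (Sum.elim id id v)) ∧
      ¬ G.Adj x1 (Sum.inr (Sum.elim id id v))} with hV1def
  set V2 : Set (Fin n ⊕ Fin n) := {v : Fin n ⊕ Fin n | v ≠ x1 ∧ v ≠ y1} with hV2def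
  rw [coverIdeal, coverIdealOn, coverIdealOn, Ideal.span_mul_span', Ideal.span_mul_span',
    Submodule.add_eq_sup, ← Ideal.span_union]
  congr 1
  -- basic facts
  have hx1y1 : G.Adj x1 y1 := h3 ⟨0, hn⟩
  have hKey := keyLemma hn G h2 h3 h4 h6
  have hF1 : ∀ w, G.Adj w y1 → w = x1 := fun w hw => adj_y1_eq hn G h2 h4 w hw
  have hNV1 : ∀ v, G.Adj x1 v → v ∉ V1 := by
    intro v hv hvV1
    cases v with
    | inl i => exact hvV1.1 hv
    | inr i => exact hvV1.2 hv
  have hV1N : ∀ v ∈ V1, ¬ G.Adj x1 v := fun v hv hadj => hNV1 v hadj hv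
  have hx1V1 : x1 ∉ V1 := fun h => h.2 hx1y1
  have hx1V2 : x1 ∉ V2 := fun h => h.1 rfl
  have hy1V2 : y1 ∉ V2 := fun h => h.2 rfl
  have hnotV1 : ∀ v, v ∉ V1 →
      G.Adj x1 (Sum.inl (Sum.elim id id v)) ∨ G.Adj x1 (Sum.inr (Sum.elim id id v)) := by
    intro v hv
    rw [hV1def, Set.mem_setOf_eq, not_and_or, not_not, not_not] at hv
    exact hv
  have hy1nex1 : y1 ≠ x1 := by simp [hx1def, hy1def]
  ext m
  simp only [Set.mem_union, Set.mem_mul, Set.mem_setOf_eq, Set.mem_singleton_iff]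
  constructor
  · rintro ⟨C, hC, rfl⟩
    rw [isMinimalVertexCover_iff] at hC
    obtain ⟨hCc, hCp⟩ := hC
    by_cases hx : x1 ∈ C
    · right
      have hy1C : y1 ∉ C := by
        intro hy
        obtain ⟨w, hw, hwC⟩ := hCp y1 (Finset.mem_coe.mpr hy)
        have hwx : w = x1 := hF1 w hw.symm
        subst hwx
        exact hwC (Finset.mem_coe.mpr hx)
      have hsub : ↑(C.erase x1) ⊆ V2 := by
        intro v hv
        rw [Finset.mem_coe, Finset.mem_erase] at hv
        exact ⟨hv.1, fun h => hy1C (h ▸ hv.2)⟩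
      refine ⟨MvPolynomial.X x1, rfl, ∏ v ∈ C.erase x1, MvPolynomial.X v,
        ⟨C.erase x1, hsub, ?_, rfl⟩, ?_⟩
      · rw [induce_mvc_iff_fin G V2 _ hsub]
        constructor
        · intro a b haW hbW hab
          rcases hCc hab with h | h
          · left
            rw [Finset.mem_erase]
            exact ⟨haW.1, Finset.mem_coe.mp h⟩
          · right
            rw [Finset.mem_erase]
            exact ⟨hbW.1, Finset.mem_coe.mp h⟩
        · intro v hv
          rw [Finset.mem_erase] at hv
          obtain ⟨hvne, hvC⟩ := hv
          obtain ⟨w, hw, hwC⟩ := hCp v (Finset.mem_coe.mpr hvC)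
          refine ⟨w, ⟨?_, ?_⟩, hw, fun h => hwC ?_⟩
          · intro h
            exact hwC (Finset.mem_coe.mpr (h ▸ hx))
          · intro h
            exact hvne (hF1 v (h ▸ hw))
          · rw [Finset.mem_erase] at h
            exact Finset.mem_coe.mpr h.2
      · exact Finset.mul_prod_erase C _ hx
    · left
      have hNsub : G.neighborFinset x1 ⊆ C := by
        intro w hw
        rw [SimpleGraph.mem_neighborFinset] at hw
        rcases hCc hw with h | h
        · exact absurd (Finset.mem_coe.mp h) hx
        · exact Finset.mem_coe.mp h
      have hsub : ↑(C \ G.neighborFinset x1) ⊆ V1 := by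
        intro v hv
        rw [Finset.mem_coe, Finset.mem_sdiff, SimpleGraph.mem_neighborFinset] at hv
        obtain ⟨hvC, hvN⟩ := hv
        by_contra hnV1
        have hvx : v ≠ x1 := fun h => hx (h ▸ hvC)
        obtain ⟨w, hw, hwC⟩ := hCp v (Finset.mem_coe.mpr hvC)
        rcases hKey v w hw (hnotV1 v hnV1) hvx hvN with rfl | hadj
        · exact hvN hw.symm
        · exact hwC (Finset.mem_coe.mpr (hNsub ((SimpleGraph.mem_neighborFinset G x1 w).mpr hadj)))
      refine ⟨∏ v ∈ G.neighborFinset x1, MvPolynomial.X v, rfl,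
        ∏ v ∈ C \ G.neighborFinset x1, MvPolynomial.X v,
        ⟨C \ G.neighborFinset x1, hsub, ?_, rfl⟩, ?_⟩
      · rw [induce_mvc_iff_fin G V1 _ hsub]
        constructor
        · intro a b haW hbW hab
          rcases hCc hab with h | h
          · left
            rw [Finset.mem_sdiff, SimpleGraph.mem_neighborFinset]
            exact ⟨Finset.mem_coe.mp h, hV1N a haW⟩
          · right
            rw [Finset.mem_sdiff, SimpleGraph.mem_neighborFinset]
            exact ⟨Finset.mem_coe.mp h, hV1N b hbW⟩
        · intro v hv
          rw [Finset.mem_sdiff, SimpleGraph.mem_neighborFinset] at hv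
          obtain ⟨hvC, hvN⟩ := hv
          obtain ⟨w, hw, hwC⟩ := hCp v (Finset.mem_coe.mpr hvC)
          have hwNC : w ∉ G.neighborFinset x1 := fun h => hwC (Finset.mem_coe.mpr (hNsub h))
          have hwN : ¬ G.Adj x1 w := fun h => hwNC ((SimpleGraph.mem_neighborFinset G x1 w).mpr h)
          have hwx : w ≠ x1 := by
            rintro rfl
            exact hvN hw.symm
          have hwV1 : w ∈ V1 := by
            by_contra hnV1
            rcases hKey w v hw.symm (hnotV1 w hnV1) hwx hwN with rfl | hadj
            · exact hx hvC
            · exact hvN hadj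
          refine ⟨w, hwV1, hw, fun h => hwC ?_⟩
          rw [Finset.mem_sdiff] at h
          exact Finset.mem_coe.mpr h.1
      · rw [mul_comm]
        exact Finset.prod_sdiff hNsub
  · rintro (⟨z, rfl, a, ⟨C'', hsub, hmin, rfl⟩, rfl⟩ | ⟨z, rfl, a, ⟨C', hsub, hmin, rfl⟩, rfl⟩)
    · -- z = prod over neighborhood, C'' min cover of G1
      rw [induce_mvc_iff_fin G V1 _ hsub] at hmin
      obtain ⟨hcov, hpriv⟩ := hmin
      have hdisj : Disjoint (G.neighborFinset x1) C'' := by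
        rw [Finset.disjoint_left]
        intro v hv hv2
        exact hNV1 v ((SimpleGraph.mem_neighborFinset G x1 v).mp hv) (hsub (Finset.mem_coe.mpr hv2))
      refine ⟨G.neighborFinset x1 ∪ C'', ?_, (Finset.prod_union hdisj).symm⟩
      rw [isMinimalVertexCover_iff]
      constructor
      · intro a b hab
        by_cases hb1 : G.Adj x1 b
        · right
          rw [Finset.mem_coe, Finset.mem_union, SimpleGraph.mem_neighborFinset]
          exact Or.inl hb1
        by_cases ha1 : G.Adj x1 a
        · left
          rw [Finset.mem_coe, Finset.mem_union, SimpleGraph.mem_neighborFinset]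
          exact Or.inl ha1
        have hax : a ≠ x1 := by
          rintro rfl
          exact hb1 hab
        have hbx : b ≠ x1 := by
          rintro rfl
          exact ha1 hab.symm
        have haV1 : a ∈ V1 := by
          by_contra hnV1
          rcases hKey a b hab (hnotV1 a hnV1) hax ha1 with rfl | hadj
          · exact hbx rfl
          · exact hb1 hadj
        have hbV1 : b ∈ V1 := by
          by_contra hnV1
          rcases hKey b a hab.symm (hnotV1 b hnV1) hbx hb1 with rfl | hadj
          · exact hax rfl
          · exact ha1 hadj
        rcases hcov haV1 hbV1 hab with h | h
        · left
          rw [Finset.mem_coe, Finset.mem_union]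
          exact Or.inr h
        · right
          rw [Finset.mem_coe, Finset.mem_union]
          exact Or.inr h
      · intro v hv
        rw [Finset.mem_coe, Finset.mem_union] at hv
        rcases hv with hv | hv
        · rw [SimpleGraph.mem_neighborFinset] at hv
          refine ⟨x1, hv.symm, fun h => ?_⟩
          rw [Finset.mem_coe, Finset.mem_union] at h
          rcases h with h | h
          · rw [SimpleGraph.mem_neighborFinset] at h
            exact G.irrefl h
          · exact hx1V1 (hsub (Finset.mem_coe.mpr h))
        · obtain ⟨w, hwV1, hw, hwC⟩ := hpriv v hv
          refine ⟨w, hw, fun h => ?_⟩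
          rw [Finset.mem_coe, Finset.mem_union] at h
          rcases h with h | h
          · rw [SimpleGraph.mem_neighborFinset] at h
            exact hV1N w hwV1 h
          · exact hwC h
    · -- z = X x1, C' min cover of G minus x1 y1
      rw [induce_mvc_iff_fin G V2 _ hsub] at hmin
      obtain ⟨hcov, hpriv⟩ := hmin
      have hx1C' : x1 ∉ C' := fun h => hx1V2 (hsub (Finset.mem_coe.mpr h))
      have hy1C' : y1 ∉ C' := fun h => hy1V2 (hsub (Finset.mem_coe.mpr h))
      refine ⟨insert x1 C', ?_, (Finset.prod_insert hx1C').symm⟩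
      rw [isMinimalVertexCover_iff]
      constructor
      · intro a b hab
        by_cases hax : a = x1
        · left
          rw [Finset.mem_coe, Finset.mem_insert]
          exact Or.inl hax
        by_cases hbx : b = x1
        · right
          rw [Finset.mem_coe, Finset.mem_insert]
          exact Or.inl hbx
        by_cases hay : a = y1
        · subst hay
          exact absurd (hF1 b hab.symm) hbx
        by_cases hby : b = y1
        · subst hby
          exact absurd (hF1 a hab) hax
        rcases hcov (show a ∈ V2 from ⟨hax, hay⟩) (show b ∈ V2 from ⟨hbx, hby⟩) hab with h | h
        · left
          rw [Finset.mem_coe, Finset.mem_insert]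
          exact Or.inr h
        · right
          rw [Finset.mem_coe, Finset.mem_insert]
          exact Or.inr h
      · intro v hv
        rw [Finset.mem_coe, Finset.mem_insert] at hv
        rcases hv with rfl | hv
        · refine ⟨y1, hx1y1, fun h => ?_⟩
          rw [Finset.mem_coe, Finset.mem_insert] at h
          rcases h with h | h
          · exact hy1nex1 h
          · exact hy1C' h
        · obtain ⟨w, hwV2, hw, hwC⟩ := hpriv v hv
          refine ⟨w, hw, fun h => ?_⟩
          rw [Finset.mem_coe, Finset.mem_insert] at h
          rcases h with h | h
          · exact hwV2.1 h
          · exact hwC h
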